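/- In the abstract population protocol model with parallel (matching) scheduler, suppose protocol A stably computes the parity predicate (all n nodes start in the same state q₁, and every fair execution stabilizes to output n mod 2). Then the symmetry of A is less than 2^(|Q|−1); that is, for infinitely many n there is no execution on the all-q₁ initial configuration of size n in which every configuration up to stability has all present states with multiplicity at least 2^(|Q|−1). -/

import Mathlib

/-- One parallel step of a population protocol with transition function `δ`:
    the scheduler selects a nonempty matching (a multiset of ordered pairs of
    distinct individuals), and each selected pair interacts via `δ` while the
    remaining individuals are unchanged. -/
def PPStep {Q : Type*} [DecidableEq Q] (δ : Q → Q → Q × Q)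
    (C C' : Multiset Q) : Prop :=
  ∃ M : Multiset (Q × Q), M ≠ 0 ∧
    M.map Prod.fst + M.map Prod.snd ≤ C ∧
    C' = C - (M.map Prod.fst + M.map Prod.snd)
        + M.map (fun p => (δ p.1 p.2).1) + M.map (fun p => (δ p.1 p.2).2)

/-- Reachability: the reflexive-transitive closure of the one-step relation. -/
def PPReach {Q : Type*} [DecidableEq Q] (δ : Q → Q → Q × Q) :
    Multiset Q → Multiset Q → Prop :=
  Relation.ReflTransGen (PPStep δ)

/-- A fair infinite execution: every step is legal, and any configuration
    reachable in one step from a configuration occurring infinitely often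
    itself occurs infinitely often. -/
def FairExec {Q : Type*} [DecidableEq Q] (δ : Q → Q → Q × Q)
    (e : ℕ → Multiset Q) : Prop :=
  (∀ i, PPStep δ (e i) (e (i + 1))) ∧
  ∀ c c', PPStep δ c c' → (∀ i, ∃ j, i ≤ j ∧ e j = c) →
    (∀ i, ∃ j, i ≤ j ∧ e j = c')

set_option linter.unusedSectionVars false
namespace ParityAux

variable {Q : Type*} [DecidableEq Q] (δ : Q → Q → Q × Q)

lemma step_card {C C' : Multiset Q} (h : PPStep δ C C') :
    Multiset.card C' = Multiset.card C := by
  obtain ⟨M, hM0, hle, rfl⟩ := h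
  have hc := Multiset.card_le_card hle
  simp only [Multiset.card_add, Multiset.card_sub hle, Multiset.card_map] at *
  omega

lemma reach_card {C C' : Multiset Q} (h : PPReach δ C C') :
    Multiset.card C' = Multiset.card C := by
  induction h with
  | refl => rfl
  | tail _ hstep ih => rw [step_card δ hstep, ih]

lemma step_mono {C C' X : Multiset Q} (h : PPStep δ C C') :
    PPStep δ (C + X) (C' + X) := by
  obtain ⟨M, hM0, hle, rfl⟩ := h
  refine ⟨M, hM0, le_trans hle (Multiset.le_add_right _ _), ?_⟩
  ext q
  have := Multiset.le_iff_count.mp hle q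
  simp only [Multiset.count_add, Multiset.count_sub] at *
  omega

lemma reach_mono {C C' X : Multiset Q} (h : PPReach δ C C') :
    PPReach δ (C + X) (C' + X) := by
  induction h with
  | refl => exact Relation.ReflTransGen.refl
  | tail _ hstep ih => exact ih.tail (step_mono δ hstep)

lemma reach_double {C C' : Multiset Q} (h : PPReach δ C C') :
    PPReach δ (C + C) (C' + C') := by
  have h1 : PPReach δ (C + C) (C' + C) := reach_mono δ h
  have h2 : PPReach δ (C + C') (C' + C') := reach_mono δ h
  rw [add_comm C C'] at h2
  exact h1.trans h2

lemma step_exists {C : Multiset Q} (h : 2 ≤ Multiset.card C) :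
    ∃ C', PPStep δ C C' := by
  have hC : C ≠ 0 := by
    intro h0; rw [h0] at h; simp at h
  obtain ⟨a, ha⟩ := Multiset.exists_mem_of_ne_zero hC
  have h1 : C.erase a ≠ 0 := by
    intro h0
    have := Multiset.card_erase_of_mem ha
    rw [h0] at this; simp at this; omega
  obtain ⟨b, hb⟩ := Multiset.exists_mem_of_ne_zero h1
  refine ⟨_, {(a, b)}, by simp, ?_, rfl⟩
  have : ({a} : Multiset Q) + {b} ≤ C := by
    rw [Multiset.le_iff_count]
    intro q
    have hc := Multiset.count_le_of_le q (Multiset.erase_le a C)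
    have hbc : 1 ≤ (C.erase a).count b := Multiset.one_le_count_iff_mem.mpr hb
    have hac : 1 ≤ C.count a := Multiset.one_le_count_iff_mem.mpr ha
    have hea : (C.erase a).count a = C.count a - 1 := Multiset.count_erase_self a C
    simp only [Multiset.count_add, Multiset.count_singleton]
    by_cases hqa : q = a
    · subst hqa
      by_cases hqb : q = b
      · subst hqb
        rw [hea] at hbc; simp; omega
      · have hcb : (C.erase q).count b = C.count b :=
          Multiset.count_erase_of_ne (fun h => hqb h.symm) C
        rw [hcb] at hbc
        simp [if_neg hqb]; omega
    · by_cases hqb : q = b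
      · subst hqb
        have hcq : (C.erase a).count q = C.count q :=
          Multiset.count_erase_of_ne hqa C
        rw [hcq] at hbc
        simp [if_neg hqa]
        omega
      · simp [if_neg hqa, if_neg hqb]
  simpa using this


/-- A finite execution path of length `ℓ` from `a` to `b`. -/
def IsPath (f : ℕ → Multiset Q) (a b : Multiset Q) (ℓ : ℕ) : Prop :=
  f 0 = a ∧ f ℓ = b ∧ ∀ i < ℓ, PPStep δ (f i) (f (i + 1))

lemma path_reach_mid {f : ℕ → Multiset Q} {a b : Multiset Q} {ℓ : ℕ}
    (h : IsPath δ f a b ℓ) : ∀ r ≤ ℓ, PPReach δ a (f r) := by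
  intro r hr
  induction r with
  | zero => rw [h.1]; exact Relation.ReflTransGen.refl
  | succ k ih =>
    exact (ih (by omega)).tail (h.2.2 k (by omega))

lemma path_toReach {f : ℕ → Multiset Q} {a b : Multiset Q} {ℓ : ℕ}
    (h : IsPath δ f a b ℓ) : PPReach δ a b := by
  have := path_reach_mid δ h ℓ le_rfl
  rwa [h.2.1] at this

lemma reach_toPath {a b : Multiset Q} (h : PPReach δ a b) :
    ∃ ℓ f, IsPath δ f a b ℓ := by
  induction h with
  | refl => exact ⟨0, fun _ => a, rfl, rfl, fun i hi => absurd hi (by omega)⟩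
  | @tail b c hab hbc ih =>
    obtain ⟨ℓ, f, hf0, hfl, hfs⟩ := ih
    refine ⟨ℓ + 1, fun i => if i ≤ ℓ then f i else c, by simp [hf0], by simp, ?_⟩
    intro i hi
    by_cases h1 : i + 1 ≤ ℓ
    · simp only [if_pos (by omega : i ≤ ℓ), if_pos h1]
      exact hfs i (by omega)
    · have hiℓ : i = ℓ := by omega
      subst hiℓ
      simp only [if_pos le_rfl, if_neg h1, hfl]
      exact hbc

lemma path_concat {f g : ℕ → Multiset Q} {a b c : Multiset Q} {ℓ₁ ℓ₂ : ℕ}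
    (hf : IsPath δ f a b ℓ₁) (hg : IsPath δ g b c ℓ₂) :
    IsPath δ (fun i => if i < ℓ₁ then f i else g (i - ℓ₁)) a c (ℓ₁ + ℓ₂) := by
  obtain ⟨hf0, hfl, hfs⟩ := hf
  obtain ⟨hg0, hgl, hgs⟩ := hg
  refine ⟨?_, ?_, ?_⟩
  · by_cases h : 0 < ℓ₁
    · simp only [if_pos h, hf0]
    · have h0 : ℓ₁ = 0 := by omega
      simp only [if_neg h]
      rw [(by omega : 0 - ℓ₁ = 0), hg0, ← hfl, h0, hf0]
  · simp only [if_neg (by omega : ¬ ℓ₁ + ℓ₂ < ℓ₁)]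
    rw [(by omega : ℓ₁ + ℓ₂ - ℓ₁ = ℓ₂), hgl]
  · intro i hi
    show PPStep δ (if i < ℓ₁ then f i else g (i - ℓ₁))
      (if i + 1 < ℓ₁ then f (i + 1) else g (i + 1 - ℓ₁))
    by_cases h1 : i + 1 < ℓ₁
    · rw [if_pos (by omega : i < ℓ₁), if_pos h1]
      exact hfs i (by omega)
    · by_cases h2 : i < ℓ₁
      · have e2 : (if i + 1 < ℓ₁ then f (i + 1) else g (i + 1 - ℓ₁)) = f (i + 1) := by
          rw [if_neg h1, (by omega : i + 1 - ℓ₁ = 0), hg0, ← hfl,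
            (by omega : ℓ₁ = i + 1)]
        rw [if_pos h2, e2]
        exact hfs i h2
      · rw [if_neg h2, if_neg h1, (by omega : i + 1 - ℓ₁ = (i - ℓ₁) + 1)]
        exact hgs (i - ℓ₁) (by omega)


lemma finite_card_eq [Fintype Q] (N : ℕ) :
    ({x : Multiset Q | Multiset.card x = N}).Finite := by
  classical
  have h : {x : Multiset Q | Multiset.card x = N} ⊆
      Set.range (fun s : Sym Q N => (s : Multiset Q)) := by
    intro x hx
    exact ⟨⟨x, hx⟩, rfl⟩
  exact (Set.finite_range _).subset h

lemma finite_reach [Fintype Q] (c : Multiset Q) :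
    ({x | PPReach δ c x}).Finite := by
  refine (finite_card_eq (Multiset.card c)).subset ?_
  intro x hx
  exact reach_card δ hx

lemma exists_terminal [Fintype Q] (C₀ : Multiset Q) :
    ∃ d, PPReach δ C₀ d ∧ ∀ x, PPReach δ d x → PPReach δ x d := by
  classical
  set V : Multiset Q → ℕ := fun c => ({x | PPReach δ c x}).ncard with hV
  have hne : (Set.range (fun p : {c // PPReach δ C₀ c} => V p.1)).Nonempty :=
    ⟨V C₀, ⟨⟨C₀, Relation.ReflTransGen.refl⟩, rfl⟩⟩
  obtain ⟨⟨d, hd⟩, hdmin⟩ := Nat.sInf_mem hne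
  refine ⟨d, hd, ?_⟩
  intro x hx
  have hVx : V d ≤ V x := by
    have h1 : V d = sInf (Set.range fun p : {c // PPReach δ C₀ c} => V p.1) := hdmin
    rw [h1]
    exact Nat.sInf_le ⟨⟨x, hd.trans hx⟩, rfl⟩
  have hsub : {y | PPReach δ x y} ⊆ {y | PPReach δ d y} := fun y hy => hx.trans hy
  have heq : {y | PPReach δ x y} = {y | PPReach δ d y} :=
    Set.eq_of_subset_of_ncard_le hsub hVx (finite_reach δ d)
  have : d ∈ {y | PPReach δ x y} := by
    rw [heq]; exact Relation.ReflTransGen.refl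
  exact this


lemma mod_succ_cases (ℓ x : ℕ) (hℓ : 0 < ℓ) :
    ((x + 1) % ℓ = x % ℓ + 1 ∧ x % ℓ + 1 < ℓ) ∨ ((x + 1) % ℓ = 0 ∧ x % ℓ + 1 = ℓ) := by
  have h := Nat.mod_lt x hℓ
  have key : (x % ℓ + 1) % ℓ = (x + 1) % ℓ := Nat.mod_add_mod x ℓ 1
  by_cases h1 : x % ℓ + 1 < ℓ
  · left
    rw [← key, Nat.mod_eq_of_lt h1]
    exact ⟨rfl, h1⟩
  · right
    have h2 : x % ℓ + 1 = ℓ := by omega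
    refine ⟨?_, h2⟩
    rw [← key, h2, Nat.mod_self]

/-- Build a loop at `d` visiting every element of `l`. -/
lemma loop_visit (d : Multiset Q) (l : List (Multiset Q))
    (h : ∀ x ∈ l, PPReach δ d x ∧ PPReach δ x d) :
    ∃ ℓ f, IsPath δ f d d ℓ ∧ ∀ x ∈ l, ∃ j ≤ ℓ, f j = x := by
  induction l with
  | nil =>
    exact ⟨0, fun _ => d, ⟨rfl, rfl, fun i hi => absurd hi (by omega)⟩, by simp⟩
  | cons x l ih =>
    obtain ⟨ℓ₂, g, hg, hgv⟩ := ih (fun y hy => h y (List.mem_cons_of_mem x hy))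
    obtain ⟨hdx, hxd⟩ := h x List.mem_cons_self
    obtain ⟨ℓa, p1, hp1⟩ := reach_toPath δ hdx
    obtain ⟨ℓb, p2, hp2⟩ := reach_toPath δ hxd
    have hP := path_concat δ hp1 hp2
    set P : ℕ → Multiset Q := fun i => if i < ℓa then p1 i else p2 (i - ℓa) with hPdef
    have hQ := path_concat δ hP hg
    refine ⟨(ℓa + ℓb) + ℓ₂, _, hQ, ?_⟩
    intro y hy
    rcases List.mem_cons.mp hy with hyx | hyl
    · subst hyx
      by_cases hb : 0 < ℓb
      · refine ⟨ℓa, by omega, ?_⟩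
        have h1 : ℓa < ℓa + ℓb := by omega
        simp only [if_pos h1]
        show P ℓa = y
        simp only [hPdef, if_neg (lt_irrefl ℓa), Nat.sub_self]
        exact hp2.1
      · -- ℓb = 0, so y = d
        have hyd : y = d := by
          have h1 := hp2.1
          have h2 := hp2.2.1
          rw [(by omega : ℓb = 0)] at h2
          rw [← h1, h2]
        refine ⟨(ℓa + ℓb) + ℓ₂, le_rfl, ?_⟩
        rw [hyd]
        exact hQ.2.1
    · obtain ⟨j, hj, hgj⟩ := hgv y hyl
      refine ⟨(ℓa + ℓb) + j, by omega, ?_⟩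
      simp only [if_neg (by omega : ¬ (ℓa + ℓb) + j < ℓa + ℓb),
        (by omega : (ℓa + ℓb) + j - (ℓa + ℓb) = j)]
      exact hgj

lemma exists_fair [Fintype Q] (C₀ X : Multiset Q) (h2 : 2 ≤ Multiset.card C₀)
    (hr : PPReach δ C₀ X) :
    ∃ (e : ℕ → Multiset Q) (s : ℕ), FairExec δ e ∧ e 0 = C₀ ∧ e s = X := by
  classical
  obtain ⟨d, hXd, hterm⟩ := exists_terminal δ X
  have hCd : PPReach δ C₀ d := hr.trans hXd
  have hcard : Multiset.card d = Multiset.card C₀ := reach_card δ hCd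
  -- a first nontrivial step from d, returning to d
  obtain ⟨y, hy⟩ := step_exists δ (C := d) (by omega)
  have hyd : PPReach δ y d := hterm y (Relation.ReflTransGen.refl.tail hy)
  obtain ⟨ℓb, p2, hp2⟩ := reach_toPath δ hyd
  have hp1 : IsPath δ (fun i => if i = 0 then d else y) d y 1 := by
    refine ⟨rfl, rfl, ?_⟩
    intro i hi
    have : i = 0 := by omega
    subst this
    simpa using hy
  have hP0 := path_concat δ hp1 hp2
  set P0 : ℕ → Multiset Q :=
    fun i => if i < 1 then (if i = 0 then d else y) else p2 (i - 1) with hP0def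
  -- loop visiting everything reachable from d
  set R : Finset (Multiset Q) := (finite_reach δ d).toFinset with hR
  have hRl : ∀ x ∈ R.toList, PPReach δ d x ∧ PPReach δ x d := by
    intro x hx
    rw [Finset.mem_toList, hR, Set.Finite.mem_toFinset] at hx
    exact ⟨hx, hterm x hx⟩
  obtain ⟨ℓ₂, g, hg, hgv⟩ := loop_visit δ d R.toList hRl
  have hL := path_concat δ hP0 hg
  set ℓ : ℕ := (1 + ℓb) + ℓ₂ with hℓdef
  set L : ℕ → Multiset Q := fun i => if i < 1 + ℓb then P0 i else g (i - (1 + ℓb)) with hLdef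
  have hℓpos : 0 < ℓ := by omega
  have hL0 : L 0 = d := hL.1
  have hLℓ : L ℓ = d := hL.2.1
  have hLvisit : ∀ x, PPReach δ d x → ∃ j < ℓ, L j = x := by
    intro x hx
    have hxR : x ∈ R.toList := by
      rw [Finset.mem_toList, hR, Set.Finite.mem_toFinset]
      exact hx
    obtain ⟨j, hj, hgj⟩ := hgv x hxR
    refine ⟨((1 + ℓb) + j) % ℓ, Nat.mod_lt _ hℓpos, ?_⟩
    have hval : L ((1 + ℓb) + j) = x := by
      simp only [hLdef, if_neg (by omega : ¬ (1 + ℓb) + j < 1 + ℓb),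
        (by omega : (1 + ℓb) + j - (1 + ℓb) = j)]
      exact hgj
    by_cases hcase : (1 + ℓb) + j < ℓ
    · rwa [Nat.mod_eq_of_lt hcase]
    · have hje : (1 + ℓb) + j = ℓ := by omega
      rw [hje, Nat.mod_self, hL0, ← hLℓ, ← hje, hval]
  -- prefix
  obtain ⟨ℓx, px, hpx⟩ := reach_toPath δ hr
  obtain ⟨ℓy, py, hpy⟩ := reach_toPath δ hXd
  have hpre := path_concat δ hpx hpy
  set a : ℕ := ℓx + ℓy with hadef
  set pre : ℕ → Multiset Q := fun i => if i < ℓx then px i else py (i - ℓx) with hpredef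
  -- the execution
  set e : ℕ → Multiset Q := fun i => if i < a then pre i else L ((i - a) % ℓ) with hedef
  have hea : ∀ i, a ≤ i → e i = L ((i - a) % ℓ) := by
    intro i hi
    simp only [hedef, if_neg (by omega : ¬ i < a)]
  have hsteps : ∀ i, PPStep δ (e i) (e (i + 1)) := by
    intro i
    by_cases h1 : i + 1 < a
    · simp only [hedef, if_pos (by omega : i < a), if_pos h1]
      exact hpre.2.2 i (by omega)
    · by_cases h2 : i < a
      · have hia : i + 1 = a := by omega
        have hv1 : e i = pre i := by simp only [hedef, if_pos h2]
        have hv2 : e (i + 1) = pre (i + 1) := by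
          rw [hea (i + 1) (by omega), hia, Nat.sub_self, Nat.zero_mod, hL0, ← hpre.2.1]
        rw [hv1, hv2]
        exact hpre.2.2 i (by omega)
      · rw [hea i (by omega), hea (i + 1) (by omega)]
        have hsub : i + 1 - a = (i - a) + 1 := by omega
        rw [hsub]
        rcases mod_succ_cases ℓ (i - a) hℓpos with ⟨hm, hlt⟩ | ⟨hm, heq⟩
        · rw [hm]
          exact hL.2.2 ((i - a) % ℓ) (by omega)
        · have hgoal : PPStep δ (L ((i - a) % ℓ)) (L ((i - a) % ℓ + 1)) :=
            hL.2.2 ((i - a) % ℓ) (by omega)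
          rw [heq] at hgoal
          rw [hm, hL0, ← hLℓ]
          exact hgoal
  have hreach_e : ∀ i j, i ≤ j → PPReach δ (e i) (e j) := by
    intro i j hij
    induction j with
    | zero =>
      have : i = 0 := by omega
      subst this
      exact Relation.ReflTransGen.refl
    | succ k ihk =>
      rcases Nat.lt_or_ge i (k + 1) with h | h
      · exact (ihk (by omega)).tail (hsteps k)
      · have : i = k + 1 := by omega
        subst this
        exact Relation.ReflTransGen.refl
  refine ⟨e, ℓx, ⟨hsteps, ?_⟩, ?_, ?_⟩
  · -- fairness
    intro c c' hstep hocc i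
    obtain ⟨j, hj, hej⟩ := hocc a
    have hdc : PPReach δ d c := by
      rw [← hej, hea j hj]
      exact path_reach_mid δ hL _ (le_of_lt (Nat.mod_lt _ hℓpos))
    have hdc' : PPReach δ d c' := hdc.tail hstep
    obtain ⟨j₁, hj₁, hLj₁⟩ := hLvisit c' hdc'
    refine ⟨a + j₁ + i * ℓ, by nlinarith, ?_⟩
    rw [hea _ (by omega), (by omega : a + j₁ + i * ℓ - a = j₁ + i * ℓ),
      Nat.add_mul_mod_self_right, Nat.mod_eq_of_lt hj₁, hLj₁]
  · -- e 0 = C₀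
    by_cases h : 0 < a
    · simp only [hedef, if_pos h]
      exact hpre.1
    · rw [hea 0 (by omega), Nat.zero_sub, Nat.zero_mod, hL0]
      have hC₀d : C₀ = d := by
        have h1 := hpre.1
        have h2 := hpre.2.1
        rw [(by omega : a = 0)] at h2
        rw [← h1, h2]
      rw [hC₀d]
  · -- e ℓx = X
    by_cases h : ℓx < a
    · simp only [hedef, if_pos h, hpredef, if_neg (lt_irrefl ℓx), Nat.sub_self]
      exact hpy.1
    · have hXd' : X = d := by
        have h1 := hpy.1
        have h2 := hpy.2.1
        rw [(by omega : ℓy = 0)] at h2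
        rw [← h1, h2]
      rw [hea ℓx (by omega), (by omega : ℓx - a = 0), Nat.zero_mod, hL0, hXd']


lemma exec_reach {e : ℕ → Multiset Q} (hs : ∀ i, PPStep δ (e i) (e (i + 1))) :
    ∀ i j, i ≤ j → PPReach δ (e i) (e j) := by
  intro i j hij
  induction j with
  | zero =>
    have : i = 0 := by omega
    subst this
    exact Relation.ReflTransGen.refl
  | succ k ihk =>
    rcases Nat.lt_or_ge i (k + 1) with h | h
    · exact (ihk (by omega)).tail (hs k)
    · have : i = k + 1 := by omega
      subst this
      exact Relation.ReflTransGen.refl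

end ParityAux

/-- Production trees: histories of how a single state token gets produced. -/
inductive PTree (Q : Type*) : Type _ where
  | leaf (q : Q) : PTree Q
  | node (q : Q) (l r : PTree Q) : PTree Q

namespace PTree

variable {Q : Type*} [DecidableEq Q]

def root : PTree Q → Q
  | leaf q => q
  | node q _ _ => q

def leaves : PTree Q → Multiset Q
  | leaf q => {q}
  | node _ l r => leaves l + leaves r

def states : PTree Q → Finset Q
  | leaf q => {q}
  | node q l r => insert q (states l ∪ states r)

def depth : PTree Q → ℕ
  | leaf _ => 0
  | node _ l r => max (depth l) (depth r) + 1

def Valid (δ : Q → Q → Q × Q) : PTree Q → Prop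
  | leaf _ => True
  | node q l r => Valid δ l ∧ Valid δ r ∧
      (q = (δ (root l) (root r)).1 ∨ q = (δ (root l) (root r)).2)

/-- All states along any root-to-node path are distinct. -/
def Pruned : PTree Q → Prop
  | leaf _ => True
  | node q l r => Pruned l ∧ Pruned r ∧ q ∉ states l ∧ q ∉ states r

lemma root_mem_states : ∀ t : PTree Q, root t ∈ states t
  | leaf q => by simp [root, states]
  | node q l r => by simp [root, states]

lemma leaves_subset_states : ∀ t : PTree Q, ∀ q ∈ leaves t, q ∈ states t
  | leaf q => by simp [leaves, states]
  | node q l r => by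
    intro x hx
    simp only [leaves, Multiset.mem_add] at hx
    simp only [states, Finset.mem_insert, Finset.mem_union]
    rcases hx with hx | hx
    · exact Or.inr (Or.inl (leaves_subset_states l x hx))
    · exact Or.inr (Or.inr (leaves_subset_states r x hx))

lemma pruned_depth_lt_card : ∀ t : PTree Q, Pruned t → depth t + 1 ≤ (states t).card
  | leaf q => by simp [depth, states]
  | node q l r => by
    rintro ⟨hl, hr, hql, hqr⟩
    have ihl := pruned_depth_lt_card l hl
    have ihr := pruned_depth_lt_card r hr
    have hcard : (states (node q l r)).card = (states l ∪ states r).card + 1 := by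
      simp only [states]
      rw [Finset.card_insert_of_notMem (by
        simp only [Finset.mem_union]
        tauto)]
    have h1 : (states l).card ≤ (states l ∪ states r).card :=
      Finset.card_le_card Finset.subset_union_left
    have h2 : (states r).card ≤ (states l ∪ states r).card :=
      Finset.card_le_card Finset.subset_union_right
    simp only [depth]
    omega

lemma card_leaves_le : ∀ t : PTree Q, Multiset.card (leaves t) ≤ 2 ^ depth t
  | leaf q => by simp [leaves, depth]
  | node q l r => by
    have ihl := card_leaves_le l
    have ihr := card_leaves_le r
    have h1 : (2:ℕ) ^ depth l ≤ 2 ^ max (depth l) (depth r) :=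
      Nat.pow_le_pow_right (by omega) (le_max_left _ _)
    have h2 : (2:ℕ) ^ depth r ≤ 2 ^ max (depth l) (depth r) :=
      Nat.pow_le_pow_right (by omega) (le_max_right _ _)
    simp only [leaves, depth, Multiset.card_add, pow_succ]
    omega

/-- Extract a pruned valid subtree rooted at any state occurring in a pruned tree. -/
lemma extract_at_state (δ : Q → Q → Q × Q) :
    ∀ t : PTree Q, Valid δ t → Pruned t → ∀ q ∈ states t,
      ∃ s : PTree Q, Valid δ s ∧ Pruned s ∧ root s = q ∧
        (∀ x ∈ leaves s, x ∈ leaves t)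
  | leaf q₀ => by
    intro _ _ q hq
    simp only [states, Finset.mem_singleton] at hq
    exact ⟨leaf q₀, trivial, trivial, hq.symm, fun x hx => hx⟩
  | node q₀ l r => by
    rintro ⟨hvl, hvr, hvq⟩ ⟨hpl, hpr, hql, hqr⟩ q hq
    simp only [states, Finset.mem_insert, Finset.mem_union] at hq
    rcases hq with rfl | hq | hq
    · exact ⟨node q l r, ⟨hvl, hvr, hvq⟩, ⟨hpl, hpr, hql, hqr⟩, rfl, fun x hx => hx⟩
    · obtain ⟨s, h1, h2, h3, h4⟩ := extract_at_state δ l hvl hpl q hq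
      exact ⟨s, h1, h2, h3, fun x hx => by
        simp only [leaves, Multiset.mem_add]; exact Or.inl (h4 x hx)⟩
    · obtain ⟨s, h1, h2, h3, h4⟩ := extract_at_state δ r hvr hpr q hq
      exact ⟨s, h1, h2, h3, fun x hx => by
        simp only [leaves, Multiset.mem_add]; exact Or.inr (h4 x hx)⟩

/-- Prune a valid tree to an equivalent pruned valid tree. -/
lemma prune (δ : Q → Q → Q × Q) :
    ∀ t : PTree Q, Valid δ t →
      ∃ t' : PTree Q, Valid δ t' ∧ Pruned t' ∧ root t' = root t ∧
        (∀ x ∈ leaves t', x ∈ leaves t)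
  | leaf q => fun _ => ⟨leaf q, trivial, trivial, rfl, fun x hx => hx⟩
  | node q l r => by
    rintro ⟨hvl, hvr, hvq⟩
    obtain ⟨l', hvl', hpl', hrl', hll'⟩ := prune δ l hvl
    obtain ⟨r', hvr', hpr', hrr', hlr'⟩ := prune δ r hvr
    classical
    by_cases hql : q ∈ states l'
    · obtain ⟨s, h1, h2, h3, h4⟩ := extract_at_state δ l' hvl' hpl' q hql
      exact ⟨s, h1, h2, h3, fun x hx => by
        simp only [leaves, Multiset.mem_add]; exact Or.inl (hll' x (h4 x hx))⟩
    · by_cases hqr : q ∈ states r'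
      · obtain ⟨s, h1, h2, h3, h4⟩ := extract_at_state δ r' hvr' hpr' q hqr
        exact ⟨s, h1, h2, h3, fun x hx => by
          simp only [leaves, Multiset.mem_add]; exact Or.inr (hlr' x (h4 x hx))⟩
      · refine ⟨node q l' r', ⟨hvl', hvr', ?_⟩, ⟨hpl', hpr', hql, hqr⟩, rfl, ?_⟩
        · rwa [hrl', hrr']
        · intro x hx
          simp only [leaves, Multiset.mem_add] at hx ⊢
          rcases hx with hx | hx
          · exact Or.inl (hll' x hx)
          · exact Or.inr (hlr' x hx)

end PTree

namespace ParityAux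

variable {Q : Type*} [DecidableEq Q] (δ : Q → Q → Q × Q)

open PTree

/-- From a reachability derivation, extract a production tree for any token of
the final configuration, with all leaves states present in the start. -/
lemma reach_extract_tree {C D : Multiset Q} (h : PPReach δ C D) :
    ∀ q₀ ∈ D, ∃ t : PTree Q, Valid δ t ∧ root t = q₀ ∧
      ∀ x ∈ leaves t, x ∈ C := by
  induction h with
  | refl =>
    intro q₀ hq₀
    exact ⟨leaf q₀, trivial, rfl, by
      intro x hx
      simp only [leaves, Multiset.mem_singleton] at hx
      subst hx; exact hq₀⟩
  | @tail D₁ D hr hstep ih =>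
    intro q₀ hq₀
    obtain ⟨M, hM0, hle, rfl⟩ := hstep
    rw [Multiset.mem_add] at hq₀
    rcases hq₀ with hq₀ | hq₀
    · rw [Multiset.mem_add] at hq₀
      rcases hq₀ with hq₀ | hq₀
      · -- untouched token, present in D₁
        have : q₀ ∈ D₁ := Multiset.mem_of_le (tsub_le_self) hq₀
        exact ih q₀ this
      · -- first output of a pair
        rw [Multiset.mem_map] at hq₀
        obtain ⟨p, hp, hq⟩ := hq₀
        have ha : p.1 ∈ D₁ := Multiset.mem_of_le hle
          (Multiset.mem_add.mpr (Or.inl (Multiset.mem_map_of_mem _ hp)))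
        have hb : p.2 ∈ D₁ := Multiset.mem_of_le hle
          (Multiset.mem_add.mpr (Or.inr (Multiset.mem_map_of_mem _ hp)))
        obtain ⟨ta, hva, hra, hla⟩ := ih p.1 ha
        obtain ⟨tb, hvb, hrb, hlb⟩ := ih p.2 hb
        refine ⟨node q₀ ta tb, ⟨hva, hvb, ?_⟩, rfl, ?_⟩
        · rw [hra, hrb, ← hq]
          exact Or.inl rfl
        · intro x hx
          simp only [leaves, Multiset.mem_add] at hx
          rcases hx with hx | hx
          · exact hla x hx
          · exact hlb x hx
    · -- second output of a pair
      rw [Multiset.mem_map] at hq₀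
      obtain ⟨p, hp, hq⟩ := hq₀
      have ha : p.1 ∈ D₁ := Multiset.mem_of_le hle
        (Multiset.mem_add.mpr (Or.inl (Multiset.mem_map_of_mem _ hp)))
      have hb : p.2 ∈ D₁ := Multiset.mem_of_le hle
        (Multiset.mem_add.mpr (Or.inr (Multiset.mem_map_of_mem _ hp)))
      obtain ⟨ta, hva, hra, hla⟩ := ih p.1 ha
      obtain ⟨tb, hvb, hrb, hlb⟩ := ih p.2 hb
      refine ⟨node q₀ ta tb, ⟨hva, hvb, ?_⟩, rfl, ?_⟩
      · rw [hra, hrb, ← hq]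
        exact Or.inr rfl
      · intro x hx
        simp only [leaves, Multiset.mem_add] at hx
        rcases hx with hx | hx
        · exact hla x hx
        · exact hlb x hx

/-- A valid tree can be executed: from its leaves one can reach a
configuration containing its root. -/
lemma tree_exec : ∀ t : PTree Q, Valid δ t →
    ∃ D, PPReach δ (leaves t) D ∧ root t ∈ D
  | leaf q => fun _ => ⟨{q}, Relation.ReflTransGen.refl, by simp [leaves, root]⟩
  | node q l r => by
    rintro ⟨hvl, hvr, hvq⟩
    obtain ⟨Dl, hDl, hrl⟩ := tree_exec l hvl
    obtain ⟨Dr, hDr, hrr⟩ := tree_exec r hvr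
    have h1 : PPReach δ (leaves l + leaves r) (Dl + leaves r) := reach_mono δ hDl
    have h2 : PPReach δ (Dl + leaves r) (Dl + Dr) := by
      have := reach_mono δ (X := Dl) hDr
      rwa [add_comm (leaves r) Dl, add_comm Dr Dl] at this
    -- one interaction between the two roots
    have hstep : PPStep δ (Dl + Dr)
        ((Dl + Dr) - ({root l} + {root r}) + {(δ (root l) (root r)).1}
          + {(δ (root l) (root r)).2}) := by
      refine ⟨{(root l, root r)}, by simp, ?_, by simp⟩
      have : ({root l} : Multiset Q) + {root r} ≤ Dl + Dr := by
        rw [Multiset.le_iff_count]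
        intro x
        have h3 : Multiset.count x ({root l} : Multiset Q) ≤ Multiset.count x Dl := by
          rw [Multiset.count_singleton]
          split
          · rename_i hx; subst hx; exact Multiset.one_le_count_iff_mem.mpr hrl
          · omega
        have h4 : Multiset.count x ({root r} : Multiset Q) ≤ Multiset.count x Dr := by
          rw [Multiset.count_singleton]
          split
          · rename_i hx; subst hx; exact Multiset.one_le_count_iff_mem.mpr hrr
          · omega
        simp only [Multiset.count_add]
        omega
      simpa using this
    refine ⟨_, ((h1.trans h2).tail hstep), ?_⟩
    show root (node q l r) ∈ _
    have hmem : q ∈ ({(δ (root l) (root r)).1} : Multiset Q) + {(δ (root l) (root r)).2} := by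
      rcases hvq with h | h <;> simp [h]
    simp only [root]
    rcases Multiset.mem_add.mp hmem with h | h
    · exact Multiset.mem_add.mpr (Or.inl (Multiset.mem_add.mpr (Or.inr h)))
    · exact Multiset.mem_add.mpr (Or.inr h)

end ParityAux


/-- Impossibility of high symmetry for parity: if protocol `A = (δ, O)` stably
    computes the parity predicate (all `n` nodes start in state `q₁` and every
    fair execution stabilizes to output `n mod 2`), then for infinitely many `n`
    there is no finite execution on the all-`q₁` initial configuration of size
    `n` that reaches stability while every configuration along the way has all
    present states of multiplicity at least `2^(|Q|−1)`; i.e., the symmetry of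
    the protocol is less than `2^(|Q|−1)`. -/
theorem parity_low_symmetry {Q : Type*} [DecidableEq Q] [Fintype Q]
    (δ : Q → Q → Q × Q) (O : Q → Bool) (q₁ : Q)
    (hcomputes : ∀ n : ℕ, 1 ≤ n →
      ∀ e : ℕ → Multiset Q, e 0 = Multiset.replicate n q₁ → FairExec δ e →
        ∃ t, ∀ C', PPReach δ (e t) C' → ∀ q ∈ C',
          O q = decide (n % 2 = 1)) :
    {n : ℕ | ¬ ∃ (m : ℕ) (e : Fin (m + 1) → Multiset Q),
        e 0 = Multiset.replicate n q₁ ∧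
        (∀ i : Fin m, PPStep δ (e i.castSucc) (e i.succ)) ∧
        (∀ C', PPReach δ (e (Fin.last m)) C' → ∀ q ∈ C',
          O q = decide (n % 2 = 1)) ∧
        (∀ i, ∀ q ∈ e i, 2 ^ (Fintype.card Q - 1) ≤ (e i).count q)}.Infinite := by
  classical
  have key : ∀ k : ℕ, (2 * k + 1) ∈ {n : ℕ | ¬ ∃ (m : ℕ) (e : Fin (m + 1) → Multiset Q),
        e 0 = Multiset.replicate n q₁ ∧
        (∀ i : Fin m, PPStep δ (e i.castSucc) (e i.succ)) ∧
        (∀ C', PPReach δ (e (Fin.last m)) C' → ∀ q ∈ C',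
          O q = decide (n % 2 = 1)) ∧
        (∀ i, ∀ q ∈ e i, 2 ^ (Fintype.card Q - 1) ≤ (e i).count q)} := by
    intro k
    set n : ℕ := 2 * k + 1 with hn
    intro hex
    obtain ⟨m, e, he0, hsteps, hstable, hcounts⟩ := hex
    set K : ℕ := 2 ^ (Fintype.card Q - 1) with hK
    set S : Multiset Q := e (Fin.last m) with hS
    -- reach from the initial configuration to S
    have hstep' : ∀ i : ℕ, ∀ hi : i < m,
        PPStep δ (e ⟨i, by omega⟩) (e ⟨i + 1, by omega⟩) := by
      intro i hi
      exact hsteps ⟨i, hi⟩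
    have hreach' : ∀ i : ℕ, ∀ hi : i ≤ m, PPReach δ (e 0) (e ⟨i, by omega⟩) := by
      intro i
      induction i with
      | zero =>
        intro _
        have h0 : (⟨0, by omega⟩ : Fin (m + 1)) = 0 := by
          apply Fin.ext; simp
        rw [h0]
        exact Relation.ReflTransGen.refl
      | succ i ih =>
        intro hi
        exact (ih (by omega)).tail (hstep' i (by omega))
    have hreachS : PPReach δ (Multiset.replicate n q₁) S := by
      have h1 := hreach' m le_rfl
      rw [he0] at h1
      have h2 : (⟨m, by omega⟩ : Fin (m + 1)) = Fin.last m := rfl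
      rwa [h2] at h1
    have hcardS : Multiset.card S = n := by
      rw [ParityAux.reach_card δ hreachS, Multiset.card_replicate]
    -- doubled execution
    have hdouble : PPReach δ (Multiset.replicate (2 * n) q₁) (S + S) := by
      have h1 := ParityAux.reach_double δ hreachS
      rwa [← Multiset.replicate_add, (by omega : n + n = 2 * n)] at h1
    have hcard0 : (2:ℕ) ≤ Multiset.card (Multiset.replicate (2 * n) q₁) := by
      rw [Multiset.card_replicate]; omega
    obtain ⟨e', s, hfair, he'0, he's⟩ :=
      ParityAux.exists_fair δ (Multiset.replicate (2 * n) q₁) (S + S) hcard0 hdouble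
    obtain ⟨t, ht⟩ := hcomputes (2 * n) (by omega) e' he'0 hfair
    set u : ℕ := max s t with hu
    have hreach_su : PPReach δ (e' s) (e' u) :=
      ParityAux.exec_reach δ hfair.1 s u (le_max_left _ _)
    have hreach_tu : PPReach δ (e' t) (e' u) :=
      ParityAux.exec_reach δ hfair.1 t u (le_max_right _ _)
    have hfalse : ∀ q ∈ e' u, O q = false := by
      intro q hq
      have h2 : (2 * n) % 2 = 0 := by omega
      have := ht (e' u) hreach_tu q hq
      rw [this]
      simp [h2]
    -- pick a token with output false
    have hcardu : Multiset.card (e' u) = 2 * n := by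
      have h1 := ParityAux.reach_card δ (ParityAux.exec_reach δ hfair.1 0 u (by omega))
      rw [he'0, Multiset.card_replicate] at h1
      exact h1
    have hne : e' u ≠ 0 := by
      intro h0
      rw [h0] at hcardu
      simp only [Multiset.card_zero] at hcardu
      omega
    obtain ⟨q₀, hq₀⟩ := Multiset.exists_mem_of_ne_zero hne
    have hOq₀ : O q₀ = false := hfalse q₀ hq₀
    -- production tree for q₀ from S + S
    have hreach_SS : PPReach δ (S + S) (e' u) := by
      rw [← he's]; exact hreach_su
    obtain ⟨t₀, hv₀, hr₀, hl₀⟩ := ParityAux.reach_extract_tree δ hreach_SS q₀ hq₀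
    obtain ⟨t', hv', hp', hr', hl'⟩ := PTree.prune δ t₀ hv₀
    have hleafS : ∀ x ∈ PTree.leaves t', x ∈ S := by
      intro x hx
      have := hl₀ x (hl' x hx)
      rcases Multiset.mem_add.mp this with h | h <;> exact h
    -- count bound on leaves
    have hdepth : PTree.depth t' ≤ Fintype.card Q - 1 := by
      have h1 := PTree.pruned_depth_lt_card t' hp'
      have h2 : (PTree.states t').card ≤ Fintype.card Q := by
        rw [← Finset.card_univ]
        exact Finset.card_le_card (Finset.subset_univ _)
      omega
    have hcount : ∀ q : Q, (PTree.leaves t').count q ≤ K := by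
      intro q
      calc (PTree.leaves t').count q ≤ Multiset.card (PTree.leaves t') :=
            Multiset.count_le_card q _
        _ ≤ 2 ^ PTree.depth t' := PTree.card_leaves_le t'
        _ ≤ K := Nat.pow_le_pow_right (by omega) hdepth
    have hLS : PTree.leaves t' ≤ S := by
      rw [Multiset.le_iff_count]
      intro q
      by_cases hq : q ∈ PTree.leaves t'
      · exact le_trans (hcount q) (hcounts (Fin.last m) q (hleafS q hq))
      · rw [Multiset.count_eq_zero_of_notMem hq]
        omega
    -- execute the tree inside S
    obtain ⟨D₀, hD₀, hq₀D₀⟩ := ParityAux.tree_exec δ t' hv'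
    have hfinal : PPReach δ S (D₀ + (S - PTree.leaves t')) := by
      have h1 := ParityAux.reach_mono δ (X := S - PTree.leaves t') hD₀
      rwa [add_tsub_cancel_of_le hLS] at h1
    have hfin2 := hstable _ hfinal (PTree.root t') (Multiset.mem_add.mpr (Or.inl hq₀D₀))
    rw [hr', hr₀, hOq₀] at hfin2
    have hmod : n % 2 = 1 := by omega
    simp [hmod] at hfin2
  have hinj : Function.Injective (fun k : ℕ => 2 * k + 1) := by
    intro a b h
    simpa using (by omega : 2 * a + 1 = 2 * b + 1 → a = b) (by simpa using h)
  exact Set.infinite_of_injective_forall_mem hinj key
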